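/- Let k be an even nonnegative integer and t ∈ ℝ with 0 < |t|. Set ε_t = t/|t|. Then |((ie^t + 1)/sqrt(e^{2t}+1))^{−k} − (−ε_t)^{k/2}| ≪ k·e^{−|t|}, and |(−e^t + e^{−t})/(e^t + e^{−t}) + ε_t| ≪ e^{−2|t|}, with absolute implied constants. -/

import Mathlib

private lemma abs_pow_sub_pow_le' {x y : ℂ} (hx : ‖x‖ ≤ 1) (hy : ‖y‖ ≤ 1) :
    ∀ m : ℕ, ‖x ^ m - y ^ m‖ ≤ m * ‖x - y‖ := by
  intro m
  induction m with
  | zero => simp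
  | succ n ih =>
    have hid : x ^ (n+1) - y ^ (n+1) = x ^ n * (x - y) + (x ^ n - y ^ n) * y := by ring
    rw [hid]
    calc ‖x ^ n * (x - y) + (x ^ n - y ^ n) * y‖
        ≤ ‖x ^ n * (x - y)‖ + ‖(x ^ n - y ^ n) * y‖ :=
          norm_add_le _ _
      _ ≤ 1 * ‖x - y‖ + (n * ‖x - y‖) * 1 := by
          rw [norm_mul, norm_mul, norm_pow]
          gcongr
          exact pow_le_one₀ (norm_nonneg x) hx
      _ = (n + 1 : ℕ) * ‖x - y‖ := by push_cast; ring

private lemma habsu (t : ℝ) :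
    ‖Complex.I * (Real.exp t : ℝ) + 1‖ = Real.sqrt (Real.exp (2*t) + 1) := by
  have h2 : Real.exp (2*t) = Real.exp t * Real.exp t := by rw [two_mul, Real.exp_add]
  rw [Complex.norm_def, Complex.normSq_apply]
  simp only [Complex.add_re, Complex.mul_re, Complex.I_re, Complex.I_im, Complex.ofReal_re,
    Complex.ofReal_im, Complex.one_re, Complex.add_im, Complex.mul_im, Complex.one_im]
  rw [h2]
  ring_nf

private lemma core_bound (t : ℝ) (ht : t ≠ 0) :
    ‖((Complex.I * (Real.exp t : ℝ) + 1) / ((Real.sqrt (Real.exp (2 * t) + 1) : ℝ) : ℂ)) ^ 2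
          - ((-(t / |t|) : ℝ) : ℂ)‖ ≤ 2 * Real.exp (-|t|) := by
  set A := Real.exp t with hA
  have hApos : 0 < A := Real.exp_pos t
  have h2 : Real.exp (2 * t) = A * A := by rw [two_mul, Real.exp_add]
  set S := Real.sqrt (Real.exp (2 * t) + 1) with hS
  have hSpos : 0 < S := Real.sqrt_pos.mpr (by positivity)
  have hSsq : S ^ 2 = A * A + 1 := by
    rw [hS, Real.sq_sqrt (by positivity), h2]
  have hS2c : ((S : ℝ) : ℂ) ^ 2 = ((A * A + 1 : ℝ) : ℂ) := by
    rw [← Complex.ofReal_pow, hSsq]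
  have hSne : ((S : ℝ) : ℂ) ≠ 0 := Complex.ofReal_ne_zero.mpr hSpos.ne'
  have hu : ‖Complex.I * (A : ℝ) + 1‖ = S := by
    rw [hS, hA]; exact habsu t
  rcases ht.lt_or_gt with h | h
  · -- t < 0
    have hr1 : ((-(t / |t|) : ℝ) : ℂ) = 1 := by
      have : t / |t| = -1 := by rw [abs_of_neg h]; field_simp
      rw [this]; norm_num
    have hexpand : (Complex.I * (A : ℝ) + 1) ^ 2 - ((S : ℝ) : ℂ) ^ 2
        = 2 * Complex.I * (A : ℝ) * (Complex.I * (A : ℝ) + 1) := by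
      rw [hS2c]; push_cast; linear_combination (-(A : ℂ) ^ 2) * Complex.I_sq
    have hid : ((Complex.I * (A : ℝ) + 1) / ((S : ℝ) : ℂ)) ^ 2 - ((-(t / |t|) : ℝ) : ℂ)
        = 2 * Complex.I * (A : ℝ) * (Complex.I * (A : ℝ) + 1) / ((S : ℝ) : ℂ) ^ 2 := by
      rw [hr1, ← hexpand, sub_div, div_self (pow_ne_zero _ hSne), div_pow]
    rw [hid, norm_div, norm_mul, norm_mul, norm_mul, norm_pow]
    rw [Complex.norm_I, Complex.norm_real, Real.norm_eq_abs, Complex.norm_real, Real.norm_eq_abs, abs_of_pos hSpos,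
      abs_of_pos hApos, hu]
    have habs2 : ‖(2 : ℂ)‖ = 2 := by norm_num
    rw [habs2, abs_of_neg h, neg_neg]
    have hS1 : 1 ≤ S := by
      rw [show (1 : ℝ) = Real.sqrt 1 by simp, hS]
      exact Real.sqrt_le_sqrt (by nlinarith [Real.exp_pos (2 * t)])
    have heq : 2 * 1 * A * S / S ^ 2 = 2 * A / S := by
      rw [sq]; field_simp
    rw [heq]
    calc 2 * A / S ≤ 2 * A / 1 := by gcongr
      _ = 2 * Real.exp t := by rw [div_one]
  · -- t > 0
    have hr1 : ((-(t / |t|) : ℝ) : ℂ) = -1 := by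
      rw [abs_of_pos h, div_self h.ne']; norm_num
    have hexpand : (Complex.I * (A : ℝ) + 1) ^ 2 + ((S : ℝ) : ℂ) ^ 2
        = 2 * (Complex.I * (A : ℝ) + 1) := by
      rw [hS2c]; push_cast; linear_combination ((A : ℂ) ^ 2) * Complex.I_sq
    have hid : ((Complex.I * (A : ℝ) + 1) / ((S : ℝ) : ℂ)) ^ 2 - ((-(t / |t|) : ℝ) : ℂ)
        = 2 * (Complex.I * (A : ℝ) + 1) / ((S : ℝ) : ℂ) ^ 2 := by
      rw [hr1, sub_neg_eq_add, div_pow, ← hexpand, add_div, div_self (pow_ne_zero _ hSne)]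
    rw [hid, norm_div, norm_mul, norm_pow, Complex.norm_real, Real.norm_eq_abs, abs_of_pos hSpos, hu]
    have habs2 : ‖(2 : ℂ)‖ = 2 := by norm_num
    rw [habs2, abs_of_pos h, Real.exp_neg]
    have hAS : A ≤ S := by
      calc A = Real.sqrt (A * A) := (Real.sqrt_mul_self hApos.le).symm
        _ ≤ S := by rw [hS, h2]; exact Real.sqrt_le_sqrt (by linarith)
    have heq : 2 * S / S ^ 2 = 2 / S := by rw [sq]; field_simp
    rw [heq, show 2 * (Real.exp t)⁻¹ = 2 / A by rw [div_eq_mul_inv]]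
    gcongr


/-- With absolute implied constants, for even `k ≥ 0` and `t ≠ 0`, setting
`ε_t = t/|t|`: `|((ie^t+1)/√(e^{2t}+1))^{−k} − (−ε_t)^{k/2}| ≪ k e^{−|t|}` and
`|(−e^t+e^{−t})/(e^t+e^{−t}) + ε_t| ≪ e^{−2|t|}`. -/
theorem stmt_10 :
    ∃ C : ℝ, 0 < C ∧ ∀ (k : ℕ) (t : ℝ), Even k → t ≠ 0 →
      ‖((Complex.I * (Real.exp t : ℝ) + 1) / ((Real.sqrt (Real.exp (2 * t) + 1) : ℝ) : ℂ))
              ^ (-(k : ℤ)) - ((-(t / |t|) : ℝ) : ℂ) ^ (k / 2)‖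
        ≤ C * k * Real.exp (-|t|) ∧
      abs ((-Real.exp t + Real.exp (-t)) / (Real.exp t + Real.exp (-t)) + t / |t|)
        ≤ C * Real.exp (-2 * |t|) := by
  refine ⟨2, by norm_num, fun k t hk ht => ⟨?_, ?_⟩⟩
  · -- first inequality
    obtain ⟨m, hm⟩ := hk
    have hk2 : k / 2 = m := by omega
    set z : ℂ := (Complex.I * (Real.exp t : ℝ) + 1) / ((Real.sqrt (Real.exp (2 * t) + 1) : ℝ) : ℂ)
      with hz
    set r : ℂ := ((-(t / |t|) : ℝ) : ℂ) with hr
    have habz : ‖z‖ = 1 := by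
      rw [hz, norm_div, habsu t, Complex.norm_real, Real.norm_eq_abs,
        abs_of_pos (Real.sqrt_pos.mpr (by positivity)),
        div_self (Real.sqrt_pos.mpr (by positivity)).ne']
    have hz0 : z ≠ 0 := by
      intro h0; rw [h0] at habz; simp at habz
    have hrabs : ‖r‖ = 1 := by
      rw [hr, Complex.norm_real, Real.norm_eq_abs, abs_neg, abs_div, abs_abs, div_self (abs_ne_zero.mpr ht)]
    have hrr : r * r = 1 := by
      have hcase : t / |t| = 1 ∨ t / |t| = -1 := by
        rcases ht.lt_or_gt with h | h
        · right; rw [abs_of_neg h]; field_simp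
        · left; rw [abs_of_pos h, div_self h.ne']
      rcases hcase with h | h <;> rw [hr, h] <;> norm_num
    have hc2 : r ^ m * r ^ m = 1 := by
      rw [← mul_pow, hrr, one_pow]
    have hcabs : ‖r ^ m‖ = 1 := by rw [norm_pow, hrabs, one_pow]
    have hwabs : ‖z ^ k‖ = 1 := by rw [norm_pow, habz, one_pow]
    have hw0 : z ^ k ≠ 0 := pow_ne_zero _ hz0
    have hstep : z ^ (-(k : ℤ)) - r ^ (k / 2) = ((z ^ k)⁻¹ * r ^ m) * (r ^ m - z ^ k) := by
      rw [zpow_neg, zpow_natCast, hk2]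
      have : ((z ^ k)⁻¹ * r ^ m) * (r ^ m - z ^ k)
          = (z ^ k)⁻¹ * (r ^ m * r ^ m) - ((z ^ k)⁻¹ * z ^ k) * r ^ m := by ring
      rw [this, hc2, inv_mul_cancel₀ hw0, mul_one, one_mul]
    have hzk : z ^ k = (z ^ 2) ^ m := by
      rw [hm, show m + m = 2 * m by ring, pow_mul]
    calc ‖z ^ (-(k : ℤ)) - r ^ (k / 2)‖
        = ‖r ^ m - z ^ k‖ := by
          rw [hstep, norm_mul, norm_mul, norm_inv, hwabs, hcabs]; norm_num
      _ = ‖(z ^ 2) ^ m - r ^ m‖ := by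
          rw [← hzk, ← norm_neg, neg_sub]
      _ ≤ m * ‖z ^ 2 - r‖ :=
          abs_pow_sub_pow_le' (by rw [norm_pow, habz, one_pow]) (le_of_eq hrabs) m
      _ ≤ m * (2 * Real.exp (-|t|)) := by
          gcongr
          exact core_bound t ht
      _ ≤ 2 * k * Real.exp (-|t|) := by
          have hexp : 0 < Real.exp (-|t|) := Real.exp_pos _
          have hmk : (m : ℝ) * 2 ≤ 2 * (k : ℝ) := by
            have : (m : ℝ) ≤ (k : ℝ) := by exact_mod_cast Nat.le.intro hm.symm
            linarith
          nlinarith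
  · -- second inequality
    have hD : 0 < Real.exp t + Real.exp (-t) := by positivity
    rcases ht.lt_or_gt with h | h
    · have habst : |t| = -t := abs_of_neg h
      have hrt : t / |t| = -1 := by rw [habst]; field_simp
      rw [hrt, habst]
      have hid : (-Real.exp t + Real.exp (-t)) / (Real.exp t + Real.exp (-t)) + (-1)
          = -(2 * Real.exp t) / (Real.exp t + Real.exp (-t)) := by
        field_simp; ring
      rw [hid, abs_div, abs_neg, abs_of_nonneg (by positivity : (0:ℝ) ≤ 2 * Real.exp t),
        abs_of_pos hD]
      have hle : 2 * Real.exp t / (Real.exp t + Real.exp (-t)) ≤ 2 * Real.exp t / Real.exp (-t) := by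
        gcongr
        linarith [Real.exp_pos t]
      calc 2 * Real.exp t / (Real.exp t + Real.exp (-t)) ≤ 2 * Real.exp t / Real.exp (-t) := hle
        _ = 2 * Real.exp (-2 * -t) := by
            rw [mul_div_assoc, ← Real.exp_sub]; ring_nf
    · have habst : |t| = t := abs_of_pos h
      have hrt : t / |t| = 1 := by rw [habst, div_self h.ne']
      rw [hrt, habst]
      have hid : (-Real.exp t + Real.exp (-t)) / (Real.exp t + Real.exp (-t)) + 1
          = 2 * Real.exp (-t) / (Real.exp t + Real.exp (-t)) := by
        field_simp; ring
      rw [hid, abs_div, abs_of_nonneg (by positivity : (0:ℝ) ≤ 2 * Real.exp (-t)),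
        abs_of_pos hD]
      have hle : 2 * Real.exp (-t) / (Real.exp t + Real.exp (-t)) ≤ 2 * Real.exp (-t) / Real.exp t := by
        gcongr
        linarith [Real.exp_pos (-t)]
      calc 2 * Real.exp (-t) / (Real.exp t + Real.exp (-t)) ≤ 2 * Real.exp (-t) / Real.exp t := hle
        _ = 2 * Real.exp (-2 * t) := by
            rw [mul_div_assoc, ← Real.exp_sub]; ring_nf
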